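/- Let E_1 be the equivalence relation on (2^ℕ)^ℕ defined by x E_1 y iff x(m) = y(m) for all sufficiently large m, and let F_k be defined by x F_k y iff x(m) = y(m) for all m ≥ k. If A ⊆ (2^ℕ)^ℕ is analytic and for some k ∈ ℕ the relation E_1 restricted to A has countable index over F_k restricted to A, then the E_1-saturation of A is meager. -/

import Mathlib

open Set Topology Filter TopologicalSpace Function

variable {α : Type*} [TopologicalSpace α]

lemma isMeagre_iUnion' {ι : Sort*} [Countable ι] {s : ι → Set α}
    (h : ∀ i, IsMeagre (s i)) : IsMeagre (⋃ i, s i) := by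
  rw [IsMeagre, compl_iUnion]
  exact countable_iInter_mem.mpr h

lemma isMeagre_biUnion' {ι : Type*} {t : Set ι} (ht : t.Countable) {s : ι → Set α}
    (h : ∀ i ∈ t, IsMeagre (s i)) : IsMeagre (⋃ i ∈ t, s i) := by
  rw [IsMeagre, compl_iUnion₂]
  exact (countable_bInter_mem ht).mpr h

lemma IsMeagre.union' {s t : Set α} (hs : IsMeagre s) (ht : IsMeagre t) : IsMeagre (s ∪ t) := by
  rw [IsMeagre, compl_union]; exact Filter.inter_mem hs ht

lemma nonmeager_open {U : Set α} [BaireSpace α] (hU : IsOpen U) (hne : U.Nonempty)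
    (hm : IsMeagre U) : False := by
  obtain ⟨x, hx⟩ := hne
  obtain ⟨y, hy, hyU⟩ := (dense_of_mem_residual hm).exists_mem_open hU ⟨x, hx⟩
  exact hy hyU

/-- meager symm diff extraction -/
lemma residualEq_diffs {s u : Set α} (h : s =ᵇ u) :
    ∃ E : Set α, IsMeagre E ∧ s \ u ⊆ E ∧ u \ s ⊆ E := by
  rw [Filter.eventuallyEq_set] at h
  refine ⟨{x | x ∈ s ↔ x ∈ u}ᶜ, ?_, ?_, ?_⟩
  · rw [IsMeagre, compl_compl]; exact h
  · rintro x ⟨hs, hu⟩ hx; exact hu (hx.1 hs)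
  · rintro x ⟨hu, hs⟩ hx; exact hs (hx.2 hu)

/-- The Baire hull of an arbitrary set. -/
theorem exists_baire_hull [SecondCountableTopology α] [BaireSpace α] (S : Set α) :
    ∃ B : Set α, BaireMeasurableSet B ∧ S ⊆ B ∧ B ⊆ closure S ∧
      ∀ Z : Set α, BaireMeasurableSet Z → S ⊆ Z → IsMeagre (B \ Z) := by
  classical
  set 𝒞 : Set (Set α) := {V ∈ countableBasis α | IsMeagre (V ∩ S)} with h𝒞
  set W : Set α := ⋃₀ 𝒞 with hW
  have hWopen : IsOpen W :=
    isOpen_sUnion fun V hV => isOpen_of_mem_countableBasis hV.1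
  have hWS : IsMeagre (W ∩ S) := by
    have : W ∩ S = ⋃ V ∈ 𝒞, (V ∩ S) := by
      rw [hW, sUnion_eq_biUnion, iUnion₂_inter]
    rw [this]
    exact isMeagre_biUnion' ((countable_countableBasis α).mono (sep_subset _ _))
      (fun V hV => hV.2)
  refine ⟨Wᶜ ∪ (W ∩ S), ?_, ?_, ?_, ?_⟩
  · exact (hWopen.baireMeasurableSet.compl).union hWS.baireMeasurableSet
  · intro x hx
    by_cases h : x ∈ W
    · exact Or.inr ⟨h, hx⟩
    · exact Or.inl h
  · rintro x (hx | hx)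
    · by_contra hcl
      obtain ⟨V, hVb, hxV, hVsub⟩ := (isBasis_countableBasis α).exists_subset_of_mem_open hcl
        isClosed_closure.isOpen_compl
      refine hx (mem_sUnion.2 ⟨V, ⟨hVb, ?_⟩, hxV⟩)
      have : V ∩ S = ∅ := by
        apply eq_empty_of_forall_notMem
        rintro y ⟨hyV, hyS⟩
        exact hVsub hyV (subset_closure hyS)
      rw [this]; exact IsMeagre.empty
    · exact subset_closure hx.2
  · intro Z hZ hSZ
    have hY : BaireMeasurableSet (Wᶜ ∩ Zᶜ) :=
      hWopen.baireMeasurableSet.compl.inter hZ.compl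
    obtain ⟨u, huo, hequ⟩ := hY.residualEq_isOpen
    obtain ⟨E, hE, h1, h2⟩ := residualEq_diffs hequ
    have hu : u = ∅ := by
      by_contra hne
      obtain ⟨x, hx⟩ := nonempty_iff_ne_empty.2 hne
      obtain ⟨V, hVb, hxV, hVsub⟩ := (isBasis_countableBasis α).exists_subset_of_mem_open hx huo
      have hVW : V ⊆ W := by
        apply subset_sUnion_of_mem
        refine ⟨hVb, ?_⟩
        apply hE.mono
        intro y ⟨hyV, hyS⟩
        refine h2 ⟨hVsub hyV, ?_⟩
        rintro ⟨-, hyZc⟩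
        exact hyZc (hSZ hyS)
      have hVmeager : IsMeagre V := by
        apply hE.mono
        intro y hyV
        refine h2 ⟨hVsub hyV, ?_⟩
        rintro ⟨hyWc, -⟩
        exact hyWc (hVW hyV)
      exact nonmeager_open (isOpen_of_mem_countableBasis hVb) ⟨x, hxV⟩ hVmeager
    have hYm : IsMeagre (Wᶜ ∩ Zᶜ) := by
      apply hE.mono
      intro y hy
      exact h1 ⟨hy, by rw [hu]; exact notMem_empty y⟩
    have : (Wᶜ ∪ (W ∩ S)) \ Z ⊆ (Wᶜ ∩ Zᶜ) ∪ (W ∩ S) := by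
      rintro y ⟨(hy | hy), hyZ⟩
      · exact Or.inl ⟨hy, hyZ⟩
      · exact Or.inr hy
    exact (hYm.union' hWS).mono this


variable {α : Type*} [TopologicalSpace α]

/-- cylinder sets in Baire space -/
def cyl (l : List ℕ) : Set (ℕ → ℕ) := {σ | ∀ i, i < l.length → σ i = l.getD i 0}

lemma cyl_nil : cyl [] = univ := by
  ext σ; simp [cyl]

lemma mem_cyl_append {l : List ℕ} {σ : ℕ → ℕ} (h : σ ∈ cyl l) (hlen : l.length = n) :
    σ ∈ cyl (l ++ [σ n]) := by
  intro i hi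
  simp only [List.length_append, List.length_cons, List.length_nil] at hi
  rcases lt_or_ge i l.length with h' | h'
  · rw [List.getD_append _ _ _ _ h']; exact h i h'
  · have : i = l.length := by omega
    subst this
    rw [List.getD_append_right _ _ _ _ le_rfl]
    simp [hlen]

/-- cylinders of an element form a neighborhood basis -/
lemma cyl_subset_of_isOpen {O : Set (ℕ → ℕ)} (hO : IsOpen O) {σ : ℕ → ℕ} (hσ : σ ∈ O) :
    ∃ n : ℕ, ∀ l : List ℕ, l.length = n → σ ∈ cyl l → cyl l ⊆ O := by
  obtain ⟨I, u, hu, hsub⟩ := isOpen_pi_iff.1 hO σ hσ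
  refine ⟨I.sup id + 1, fun l hlen hσl τ hτ => hsub ?_⟩
  intro i hi
  have hil : i < l.length := by
    have : i ≤ I.sup id := Finset.le_sup (f := id) hi
    omega
  have : τ i = σ i := by rw [hτ i hil, hσl i hil]
  rw [this]
  exact (hu i hi).2

theorem analyticSet_baireMeasurableSet [T1Space α] [RegularSpace α]
    [SecondCountableTopology α] [BaireSpace α]
    {A : Set α} (hA : MeasureTheory.AnalyticSet A) : BaireMeasurableSet A := by
  classical
  rw [MeasureTheory.AnalyticSet] at hA
  rcases hA with rfl | ⟨f, hf, hfr⟩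
  · exact IsMeagre.empty.baireMeasurableSet
  choose B hB hSB hBcl hmin using fun l : List ℕ => exists_baire_hull (f '' cyl l)
  set M : Set α := ⋃ l : List ℕ, (B l \ ⋃ i : ℕ, B (l ++ [i])) with hM
  have hMm : IsMeagre M := by
    apply isMeagre_iUnion'
    intro l
    apply hmin l _ (BaireMeasurableSet.iUnion fun i => hB _)
    rintro x ⟨σ, hσ, rfl⟩
    exact mem_iUnion.2 ⟨σ l.length, hSB _ (mem_image_of_mem f (mem_cyl_append hσ rfl))⟩
  have key : B [] \ A ⊆ M := by
    intro x ⟨hxB, hxA⟩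
    by_contra hxM
    -- build the branch
    set c : List ℕ → ℕ := fun l => if h : ∃ i, x ∈ B (l ++ [i]) then h.choose else 0 with hc
    set L : ℕ → List ℕ := fun n => Nat.rec [] (fun _ l => l ++ [c l]) n with hL
    have hLsucc : ∀ n, L (n + 1) = L n ++ [c (L n)] := fun n => rfl
    have hlen : ∀ n, (L n).length = n := by
      intro n; induction n with
      | zero => rfl
      | succ n ih => rw [hLsucc, List.length_append, ih]; rfl
    have hmem : ∀ n, x ∈ B (L n) := by
      intro n; induction n with
      | zero => exact hxB
      | succ n ih =>
        have hex : ∃ i, x ∈ B (L n ++ [i]) := by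
          by_contra hno
          exact hxM (mem_iUnion.2 ⟨L n, ih, fun hx' => hno (mem_iUnion.1 hx')⟩)
        rw [hLsucc, hc]
        simp only [dif_pos hex]
        exact hex.choose_spec
    set σ : ℕ → ℕ := fun n => c (L n) with hσdef
    have hσmem : ∀ n, σ ∈ cyl (L n) := by
      intro n; induction n with
      | zero => intro i hi; simp [hlen] at hi
      | succ n ih =>
        intro i hi
        rw [hlen (n+1)] at hi
        rcases lt_or_ge i n with h' | h'
        · rw [hLsucc, List.getD_append _ _ _ _ (by rw [hlen]; exact h')]
          exact ih i (by rw [hlen]; exact h')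
        · have : i = n := by omega
          subst this
          rw [hLsucc, List.getD_append_right _ _ _ _ (by rw [hlen])]
          simp [hlen, σ]
    -- x must equal f σ
    have hxfσ : x = f σ := by
      by_contra hne
      have hnhds : ({x}ᶜ : Set α) ∈ 𝓝 (f σ) :=
        isOpen_compl_singleton.mem_nhds (by simpa using Ne.symm hne)
      obtain ⟨t, htn, htc, hts⟩ := exists_mem_nhds_isClosed_subset hnhds
      have hO : IsOpen (f ⁻¹' interior t) := (isOpen_interior).preimage hf
      have hσO : σ ∈ f ⁻¹' interior t := mem_interior_iff_mem_nhds.2 htn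
      obtain ⟨n, hn⟩ := cyl_subset_of_isOpen hO hσO
      have h1 : f '' cyl (L n) ⊆ t := by
        rintro y ⟨τ, hτ, rfl⟩
        exact interior_subset (hn (L n) (hlen n) (hσmem n) hτ)
      have h2 : x ∈ closure (f '' cyl (L n)) := hBcl _ (hmem n)
      have : x ∈ t := (closure_minimal h1 htc) h2
      exact hts this rfl
    exact hxA (hfr ▸ hxfσ ▸ mem_range_self σ)
  have hAB : A ⊆ B [] := by
    rw [← hfr]
    have : range f = f '' cyl [] := by rw [cyl_nil, image_univ]
    rw [this]; exact hSB []
  have heq : (B []) =ᵇ A := by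
    rw [Filter.eventuallyEq_set]
    have hsub : {x | x ∈ B [] ↔ x ∈ A}ᶜ ⊆ B [] \ A := by
      intro x hx
      simp only [mem_compl_iff, mem_setOf_eq, not_iff] at hx
      by_cases hxA : x ∈ A
      · exact absurd (iff_of_true (hAB hxA) hxA) (by tauto)
      · by_cases hxB : x ∈ B []
        · exact ⟨hxB, hxA⟩
        · exact absurd (iff_of_false hxB hxA) (by tauto)
    have : IsMeagre ({x | x ∈ B [] ↔ x ∈ A}ᶜ) := (hMm.mono key).mono hsub
    rw [IsMeagre, compl_compl] at this
    exact this
  exact (hB []).congr heq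

abbrev XX : Type := ℕ → ℕ → Bool
abbrev CC : Type := ℕ → Bool

noncomputable instance : BaireSpace XX := by
  letI := upgradeIsCompletelyMetrizable XX; infer_instance

noncomputable instance : BaireSpace CC := by
  letI := upgradeIsCompletelyMetrizable CC; infer_instance

example : SecondCountableTopology XX := inferInstance
example : RegularSpace XX := inferInstance
example : T1Space XX := inferInstance

/-- no singleton is open in CC -/
lemma CC.not_isOpen_singleton (b : CC) : ¬ IsOpen ({b} : Set CC) := by
  intro h
  obtain ⟨I, u, hu, hsub⟩ := isOpen_pi_iff.1 h b rfl
  set m := I.sup id + 1 with hm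
  set b' : CC := fun i => if i = m then !(b i) else b i with hb'
  have hb'mem : b' ∈ (I : Set ℕ).pi u := by
    intro i hi
    have : i ≠ m := by
      have : i ≤ I.sup id := Finset.le_sup (f := id) hi
      omega
    simp only [hb', if_neg this]
    exact (hu i hi).2
  have : b' = b := hsub hb'mem
  have := congrFun this m
  simp [hb'] at this

lemma CC.isMeagre_of_countable {T : Set CC} (hT : T.Countable) : IsMeagre T := by
  have : T = ⋃ b ∈ T, {b} := by simp
  rw [this]
  apply isMeagre_biUnion' hT
  intro b _
  rw [isMeagre_iff_countable_union_isNowhereDense]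
  refine ⟨{{b}}, ?_, countable_singleton _, by simp⟩
  rintro t rfl
  rw [IsClosed.isNowhereDense_iff isClosed_singleton]
  by_contra hne
  rw [← ne_eq, ← nonempty_iff_ne_empty] at hne
  obtain ⟨y, hy⟩ := hne
  have hyb : y ∈ ({b} : Set CC) := interior_subset hy
  rw [mem_singleton_iff] at hyb
  subst hyb
  have h1 : interior ({y} : Set CC) = {y} :=
    interior_subset.antisymm (singleton_subset_iff.2 hy)
  exact CC.not_isOpen_singleton y (h1 ▸ isOpen_interior)

/-- Kuratowski-Ulam (easy direction, special case): sections of a meager set along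
the `n`-th coordinate are meager off a meager set. -/
lemma ku_sections (n : ℕ) {M : Set XX} (hM : IsMeagre M) :
    IsMeagre {a : XX | ¬ IsMeagre {b : CC | Function.update a n b ∈ M}} := by
  classical
  obtain ⟨S, hSnwd, hScnt, hSsub⟩ := isMeagre_iff_countable_union_isNowhereDense.1 hM
  set 𝒮 : Set (Set XX) := closure '' S with h𝒮
  have h𝒮cnt : 𝒮.Countable := hScnt.image _
  have h𝒮cl : ∀ F ∈ 𝒮, IsClosed F ∧ interior F = ∅ := by
    rintro F ⟨t, ht, rfl⟩
    refine ⟨isClosed_closure, ?_⟩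
    have := (hSnwd t ht).closure
    rwa [IsNowhereDense, closure_closure] at this
  have hMsub : M ⊆ ⋃ F ∈ 𝒮, F := by
    intro x hx
    obtain ⟨t, ht, hxt⟩ := hSsub hx
    exact mem_iUnion₂.2 ⟨closure t, ⟨t, ht, rfl⟩, subset_closure hxt⟩
  set K : Set CC → Set XX → Set XX := fun W F => {a | ∀ b ∈ W, Function.update a n b ∈ F}
    with hK
  set 𝒟 : Set (Set CC) := {W ∈ countableBasis CC | W.Nonempty} with h𝒟
  have hcont : ∀ b : CC, Continuous (fun a : XX => Function.update a n b) :=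
    fun b => continuous_id.update n continuous_const
  -- each K W F is closed nowhere dense
  have hKnwd : ∀ W ∈ 𝒟, ∀ F ∈ 𝒮, IsNowhereDense (K W F) := by
    rintro W ⟨hWb, hWne⟩ F hF
    have hKcl : IsClosed (K W F) := by
      have : K W F = ⋂ b ∈ W, (fun a : XX => Function.update a n b) ⁻¹' F := by
        ext a; simp [hK, mem_iInter]
      rw [this]
      exact isClosed_biInter fun b _ => (h𝒮cl F hF).1.preimage (hcont b)
    rw [hKcl.isNowhereDense_iff]
    by_contra hne
    rw [← ne_eq, ← nonempty_iff_ne_empty] at hne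
    obtain ⟨a₀, ha₀⟩ := hne
    set P : Set XX := {x | x n ∈ W ∧ ∃ c, Function.update x n c ∈ interior (K W F)} with hP
    have hPopen : IsOpen P := by
      have h1 : IsOpen {x : XX | x n ∈ W} :=
        (isOpen_of_mem_countableBasis hWb).preimage (continuous_apply n)
      have h2 : IsOpen {x : XX | ∃ c, Function.update x n c ∈ interior (K W F)} := by
        have heq : {x : XX | ∃ c, Function.update x n c ∈ interior (K W F)} =
            ⋃ c : CC, (fun x : XX => Function.update x n c) ⁻¹' interior (K W F) := by
          ext x; simp
        rw [heq]
        exact isOpen_iUnion fun c => isOpen_interior.preimage (hcont c)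
      rw [hP, setOf_and]
      exact h1.inter h2
    have hPne : P.Nonempty := by
      obtain ⟨b, hb⟩ := hWne
      refine ⟨Function.update a₀ n b, ?_, a₀ n, ?_⟩
      · simp [hb]
      · rw [Function.update_idem, Function.update_eq_self]
        exact ha₀
    have hPF : P ⊆ F := by
      rintro x ⟨hxn, c, hc⟩
      have : Function.update x n c ∈ K W F := interior_subset hc
      have := this (x n) hxn
      rwa [Function.update_idem, Function.update_eq_self] at this
    have : P ⊆ interior F := hPopen.subset_interior_iff.2 hPF
    rw [(h𝒮cl F hF).2] at this
    exact (this hPne.choose_spec).elim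
  -- the bad set
  set bad : Set XX := ⋃ F ∈ 𝒮, ⋃ W ∈ 𝒟, K W F with hbad
  have hbadm : IsMeagre bad := by
    apply isMeagre_biUnion' h𝒮cnt
    intro F hF
    apply isMeagre_biUnion' ((countable_countableBasis CC).mono (sep_subset _ _))
    intro W hW
    rw [isMeagre_iff_countable_union_isNowhereDense]
    exact ⟨{K W F}, by rintro t rfl; exact hKnwd W hW F hF, countable_singleton _, by simp⟩
  apply hbadm.mono
  intro a ha
  simp only [mem_setOf_eq] at ha
  by_contra hab
  apply ha
  -- each section of F ∈ 𝒮 is nowhere dense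
  have hsec : ∀ F ∈ 𝒮, IsNowhereDense {b : CC | Function.update a n b ∈ F} := by
    intro F hF
    have hcl : IsClosed {b : CC | Function.update a n b ∈ F} :=
      (h𝒮cl F hF).1.preimage (continuous_const.update n continuous_id)
    rw [hcl.isNowhereDense_iff]
    by_contra hne
    rw [← ne_eq, ← nonempty_iff_ne_empty] at hne
    obtain ⟨b₀, hb₀⟩ := hne
    obtain ⟨W, hWb, hbW, hWsub⟩ :=
      (isBasis_countableBasis CC).exists_subset_of_mem_open hb₀ isOpen_interior
    apply hab
    refine mem_iUnion₂.2 ⟨F, hF, mem_iUnion₂.2 ⟨W, ⟨hWb, ⟨b₀, hbW⟩⟩, ?_⟩⟩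
    intro b hb
    have hb2 : b ∈ {b : CC | Function.update a n b ∈ F} := interior_subset (hWsub hb)
    exact hb2
  rw [isMeagre_iff_countable_union_isNowhereDense]
  refine ⟨(fun F => {b : CC | Function.update a n b ∈ F}) '' 𝒮, ?_, h𝒮cnt.image _, ?_⟩
  · rintro t ⟨F, hF, rfl⟩; exact hsec F hF
  · intro b hb
    obtain ⟨F, hF, hbF⟩ := mem_iUnion₂.1 (hMsub hb)
    exact ⟨_, ⟨F, hF, rfl⟩, hbF⟩

lemma nonmeager_open' {U : Set CC} (hU : IsOpen U) (hne : U.Nonempty)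
    (hm : IsMeagre U) : False := by
  obtain ⟨x, hx⟩ := hne
  obtain ⟨y, hy, hyU⟩ := (dense_of_mem_residual hm).exists_mem_open hU ⟨x, hx⟩
  exact hy hyU

/-- Key lemma: a Baire measurable set on which "F_{n+1} has countable index over F_n"
is meager. -/
lemma key_lemma (n : ℕ) {B : Set XX} (hB : BaireMeasurableSet B)
    (h : ∀ y ∈ B, ∃ D : Set XX, D.Countable ∧
      ∀ y' ∈ B, (∀ m, m ≠ n → y m = y' m) → ∃ d ∈ D, y' n = d n) :
    IsMeagre B := by
  classical
  by_contra hnm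
  obtain ⟨u, huo, hequ⟩ := hB.residualEq_isOpen
  rw [Filter.eventuallyEq_set] at hequ
  set E : Set XX := {x | x ∈ B ↔ x ∈ u} with hE
  have hEc : IsMeagre Eᶜ := by rw [IsMeagre, compl_compl]; exact hequ
  have hBu : B \ u ⊆ Eᶜ := by rintro x ⟨h1, h2⟩ hx; exact h2 (hx.1 h1)
  have huB : u \ B ⊆ Eᶜ := by rintro x ⟨h1, h2⟩ hx; exact h2 (hx.2 h1)
  have hune : u.Nonempty := by
    rcases u.eq_empty_or_nonempty with rfl | hne
    · exact absurd (hEc.mono (by simpa using hBu)) hnm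
    · exact hne
  have hbad := ku_sections n (hEc.mono huB)
  -- pick a good point a in u
  have : ¬ (u ⊆ {a : XX | ¬ IsMeagre {b : CC | Function.update a n b ∈ u \ B}}) := by
    intro hsub
    exact nonmeager_open huo hune (hbad.mono hsub)
  obtain ⟨a, hau, hagood⟩ := not_subset.1 this
  simp only [mem_setOf_eq, not_not] at hagood
  set V : Set CC := {b | Function.update a n b ∈ u} with hV
  have hVopen : IsOpen V := huo.preimage (continuous_const.update n continuous_id)
  have hVne : V.Nonempty := ⟨a n, by simp [hV, Function.update_eq_self, hau]⟩
  set T : Set CC := {b ∈ V | Function.update a n b ∈ B} with hT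
  have hVT : V \ T ⊆ {b : CC | Function.update a n b ∈ u \ B} := by
    rintro b ⟨hbV, hbT⟩
    exact ⟨hbV, fun hc => hbT ⟨hbV, hc⟩⟩
  have hVTm : IsMeagre (V \ T) := hagood.mono hVT
  have hTne : T.Nonempty := by
    rcases T.eq_empty_or_nonempty with hTe | hne
    · exact absurd (hVTm.mono (by rw [hTe]; simp)) (fun hm => nonmeager_open' hVopen hVne hm)
    · exact hne
  obtain ⟨b₀, hb₀⟩ := hTne
  obtain ⟨D, hDcnt, hD⟩ := h (Function.update a n b₀) hb₀.2
  have hTcnt : T.Countable := by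
    have hTsub : T ⊆ (fun d : XX => d n) '' D := by
      intro b hb
      obtain ⟨d, hd, hdn⟩ := hD (Function.update a n b) hb.2
        (fun m hm => by rw [Function.update_of_ne hm, Function.update_of_ne hm])
      refine ⟨d, hd, ?_⟩
      rw [Function.update_self] at hdn
      exact hdn.symm
    exact (hDcnt.image _).mono hTsub
  have hVm : IsMeagre V := by
    have : V ⊆ T ∪ (V \ T) := fun b hb => by
      by_cases hbT : b ∈ T
      · exact Or.inl hbT
      · exact Or.inr ⟨hb, hbT⟩
    exact ((CC.isMeagre_of_countable hTcnt).union' hVTm).mono this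
  exact nonmeager_open' hVopen hVne hVm


open MeasureTheory in
lemma isMeagre_Bn {k : ℕ} {A : Set XX}
    (hA : MeasureTheory.AnalyticSet A)
    (h : ∀ x ∈ A, ∃ D : Set XX, D.Countable ∧
      ∀ y ∈ A, (∃ n, ∀ m ≥ n, x m = y m) → ∃ d ∈ D, ∀ m ≥ k, y m = d m)
    (N : ℕ) (hkN : k ≤ N) :
    IsMeagre {y : XX | ∃ x ∈ A, ∀ m ≥ N, x m = y m} := by
  classical
  set Bn : Set XX := {y : XX | ∃ x ∈ A, ∀ m ≥ N, x m = y m} with hBn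
  -- analyticity
  have hBnA : MeasureTheory.AnalyticSet Bn := by
    rw [MeasureTheory.AnalyticSet] at hA
    rcases hA with hAe | ⟨f, hf, hfr⟩
    · have : Bn = ∅ := by
        ext y; simp [hBn, hAe]
      rw [this]; exact MeasureTheory.analyticSet_empty
    · set g : ((ℕ → ℕ) × XX) → XX := fun p m => if m < N then p.2 m else f p.1 m with hg
      have hgc : Continuous g := by
        apply continuous_pi
        intro m
        by_cases hm : m < N
        · simp only [hg, if_pos hm]
          exact (continuous_apply m).comp continuous_snd
        · simp only [hg, if_neg hm]
          exact (continuous_apply m).comp (hf.comp continuous_fst)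
      have : Bn = range g := by
        ext y
        constructor
        · rintro ⟨x, hxA, hxy⟩
          obtain ⟨τ, rfl⟩ := hfr.symm ▸ hxA
          refine ⟨(τ, y), funext fun m => ?_⟩
          by_cases hm : m < N
          · simp [hg, if_pos hm]
          · simp only [hg, if_neg hm]
            exact hxy m (by omega)
        · rintro ⟨⟨τ, w⟩, rfl⟩
          refine ⟨f τ, hfr ▸ mem_range_self τ, fun m hm => ?_⟩
          simp [hg, if_neg (by omega : ¬ m < N)]
      rw [this]
      haveI : PolishSpace ((ℕ → ℕ) × XX) := {}
      exact MeasureTheory.analyticSet_range_of_polishSpace hgc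
  have hBP : BaireMeasurableSet Bn := analyticSet_baireMeasurableSet hBnA
  -- countable index hypothesis for key_lemma
  apply key_lemma N hBP
  intro y hy
  obtain ⟨x, hxA, hxy⟩ := hy
  obtain ⟨D, hDcnt, hDprop⟩ := h x hxA
  refine ⟨D, hDcnt, ?_⟩
  intro y' hy' hagree
  obtain ⟨x', hx'A, hx'y'⟩ := hy'
  have hE1 : ∃ n, ∀ m ≥ n, x m = x' m := by
    refine ⟨N + 1, fun m hm => ?_⟩
    rw [hxy m (by omega), hagree m (by omega), ← hx'y' m (by omega)]
  obtain ⟨d, hd, hdk⟩ := hDprop x' hx'A hE1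
  refine ⟨d, hd, ?_⟩
  rw [← hx'y' N le_rfl]
  exact hdk N hkN

/-- If `A ⊆ (2^ℕ)^ℕ` is analytic and `E₁` has countable index over `F_k`
on `A` for some `k`, then the `E₁`-saturation of `A` is meager. -/
theorem statement2 (k : ℕ) (A : Set (ℕ → ℕ → Bool))
    (hA : MeasureTheory.AnalyticSet A)
    (h : ∀ x ∈ A, ∃ D : Set (ℕ → ℕ → Bool), D.Countable ∧
      ∀ y ∈ A, (∃ n, ∀ m ≥ n, x m = y m) → ∃ d ∈ D, ∀ m ≥ k, y m = d m) :
    IsMeagre {y : ℕ → ℕ → Bool | ∃ x ∈ A, ∃ n, ∀ m ≥ n, x m = y m} := by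
  have hS : {y : ℕ → ℕ → Bool | ∃ x ∈ A, ∃ n, ∀ m ≥ n, x m = y m} =
      ⋃ N : ℕ, {y : XX | ∃ x ∈ A, ∀ m ≥ N, x m = y m} := by
    ext y
    simp only [mem_setOf_eq, mem_iUnion]
    constructor
    · rintro ⟨x, hxA, n, hn⟩; exact ⟨n, x, hxA, hn⟩
    · rintro ⟨n, x, hxA, hn⟩; exact ⟨x, hxA, n, hn⟩
  rw [hS]
  apply isMeagre_iUnion'
  intro N
  have hmono : {y : XX | ∃ x ∈ A, ∀ m ≥ N, x m = y m} ⊆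
      {y : XX | ∃ x ∈ A, ∀ m ≥ N + k, x m = y m} := by
    rintro y ⟨x, hxA, hxy⟩
    exact ⟨x, hxA, fun m hm => hxy m (by omega)⟩
  exact (isMeagre_Bn hA h (N + k) (by omega)).mono hmono
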